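/- Suppose each ∇F_i is Lipschitz continuous with constant L_i > 0 and each F_i is strongly convex with modulus μ_i > 0; let σ ∈ (0, 1/2] and γ ∈ (0,1). Let x, x′ ∈ ℝⁿ with x ≠ x′, set s = x − x′ and α_i = ⟨s, ∇F_i(x) − ∇F_i(x′)⟩/‖s‖² for each i, and let d ∈ ℝⁿ with d ≠ 0 satisfy ⟨∇F_i(x), d⟩ ≤ −α_i‖d‖² for every i ∈ {1,…,m}. If β is an Armijo backtracking stepsize for direction d at x with parameters σ, γ, then min{1, min_{1≤i≤m} 2γ(1−σ)μ_i/L_i} ≤ β ≤ 1. -/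

import Mathlib

open scoped RealInnerProductSpace
open Set Filter MeasureTheory Topology

section Aux
variable {n : ℕ}

local notation "E" => EuclideanSpace ℝ (Fin n)

lemma aux_convex (f : E → ℝ) (μ : ℝ) (hμ : 0 ≤ μ)
    (hsc : ConvexOn ℝ Set.univ (fun y => f y - μ / 2 * ‖y‖ ^ 2)) :
    ConvexOn ℝ Set.univ f := by
  have h1 : ConvexOn ℝ Set.univ (fun y : E => μ / 2 * ‖y‖ ^ 2) := by
    refine ⟨convex_univ, fun p _ q _ a b ha hb hab => ?_⟩
    simp only [smul_eq_mul]
    have key : ‖a • p + b • q‖ ^ 2 ≤ a * ‖p‖ ^ 2 + b * ‖q‖ ^ 2 := by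
      have h := norm_add_sq_real (a • p) (b • q)
      have hip : ⟪a • p, b • q⟫ = a * b * ⟪p, q⟫ := by
        rw [real_inner_smul_left, real_inner_smul_right]; ring
      have hpq : ⟪p, q⟫ ≤ ‖p‖ * ‖q‖ := real_inner_le_norm p q
      have e1 : ‖a • p‖ = a * ‖p‖ := by rw [norm_smul, Real.norm_of_nonneg ha]
      have e2 : ‖b • q‖ = b * ‖q‖ := by rw [norm_smul, Real.norm_of_nonneg hb]
      rw [hip, e1, e2] at h
      nlinarith [sq_nonneg (‖p‖ - ‖q‖), mul_nonneg ha hb, sq_nonneg (a - b)]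
    nlinarith [key]
  have h2 := hsc.add h1
  have he : f = (fun y => f y - μ / 2 * ‖y‖ ^ 2) + (fun y : E => μ / 2 * ‖y‖ ^ 2) := by
    funext y; simp
  rw [he]; exact h2

lemma aux_grad_sq (c : ℝ) (w : E) :
    HasGradientAt (fun z : E => c * ‖z‖ ^ 2) ((2 * c) • w) w := by
  have hfun : (fun z : E => c * ‖z‖ ^ 2) = fun z : E => c * ⟪z, z⟫ := by
    funext z; rw [real_inner_self_eq_norm_sq]
  rw [hasGradientAt_iff_hasFDerivAt, hfun]
  have h1 := ((hasFDerivAt_id w).inner ℝ (hasFDerivAt_id w)).const_mul c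
  refine h1.congr_fderiv ?_
  ext u
  simp only [InnerProductSpace.toDual_apply_apply, ContinuousLinearMap.coe_smul', Pi.smul_apply,
    ContinuousLinearMap.coe_comp', Function.comp_apply, ContinuousLinearMap.prod_apply,
    ContinuousLinearMap.coe_id', id_eq, fderivInnerCLM_apply, real_inner_smul_left, smul_eq_mul]
  rw [real_inner_comm u w]; ring

lemma aux_support_diff {g : E → ℝ} (hg : ConvexOn ℝ Set.univ g)
    {v w : E} (hv : HasGradientAt g v w) (y : E) : g w + ⟪v, y - w⟫ ≤ g y := by
  have h1 : HasFDerivAt g (InnerProductSpace.toDual ℝ E v) w :=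
    hasGradientAt_iff_hasFDerivAt.mp hv
  have h1' : HasFDerivAt g (InnerProductSpace.toDual ℝ E v) (w + (0:ℝ) • (y - w)) := by
    simpa using h1
  have h2 : HasDerivAt (fun t : ℝ => w + t • (y - w)) (y - w) 0 := by
    simpa using ((hasDerivAt_id (0:ℝ)).smul_const (y - w)).const_add w
  have h3 : HasDerivAt (fun t : ℝ => g (w + t • (y - w))) ⟪v, y - w⟫ 0 := by
    simpa [Function.comp_def, InnerProductSpace.toDual_apply_apply] using h1'.comp_hasDerivAt 0 h2
  have key : Tendsto (slope (fun t : ℝ => g (w + t • (y - w))) 0) (𝓝[>] 0) (𝓝 ⟪v, y - w⟫) :=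
    (hasDerivAt_iff_tendsto_slope.mp h3).mono_left
      (nhdsWithin_mono 0 (fun t ht => ne_of_gt ht))
  have hb : ∀ᶠ t in 𝓝[>] (0:ℝ),
      slope (fun t : ℝ => g (w + t • (y - w))) 0 t ≤ g y - g w := by
    filter_upwards [Ioc_mem_nhdsGT_of_mem (Set.mem_Ico.mpr ⟨le_refl (0:ℝ), one_pos⟩)] with t ht
    have h0t : (0:ℝ) < t := ht.1
    have hc := hg.2 (Set.mem_univ w) (Set.mem_univ y)
      (show (0:ℝ) ≤ 1 - t by linarith [ht.2]) h0t.le (by ring)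
    have he : w + t • (y - w) = (1 - t) • w + t • y := by
      rw [smul_sub, sub_smul, one_smul]; abel
    rw [slope_def_field]
    simp only [zero_smul, add_zero, sub_zero]
    rw [div_le_iff₀ h0t, he]
    have : g ((1 - t) • w + t • y) ≤ (1 - t) * g w + t * g y := by
      simpa [smul_eq_mul] using hc
    nlinarith
  have hfin := le_of_tendsto key hb
  linarith


lemma aux_strong_support (f : E → ℝ) (μ : ℝ) (hμ : 0 < μ)
    (hsc : ConvexOn ℝ Set.univ (fun y => f y - μ / 2 * ‖y‖ ^ 2))
    {K : NNReal} (hlip : LipschitzWith K (fun y => gradient f y)) :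
    ∀ z y : E, f z + ⟪gradient f z, y - z⟫ + μ / 2 * ‖y - z‖ ^ 2 ≤ f y := by
  intro z y
  have hconv : ConvexOn ℝ Set.univ f := aux_convex f μ hμ.le hsc
  have hfc : Continuous f := by
    rw [← continuousOn_univ]
    exact hconv.continuousOn isOpen_univ
  have hgc : Continuous (fun y : E => gradient f y) := hlip.continuous
  have hdense : Dense {w : E | DifferentiableAt ℝ f w} := by
    rw [dense_iff_inter_open]
    rintro U hU ⟨z0, hz0⟩
    obtain ⟨Kl, t, ht, hKl⟩ := (hconv.locallyLipschitzOn isOpen_univ) (Set.mem_univ z0)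
    rw [nhdsWithin_univ] at ht
    have hae := hKl.ae_differentiableWithinAt_of_mem (μ := volume)
    have hVopen : IsOpen (interior t ∩ U) := isOpen_interior.inter hU
    have hz0V : z0 ∈ interior t ∩ U := ⟨mem_interior_iff_mem_nhds.mpr ht, hz0⟩
    have hVpos : volume (interior t ∩ U) ≠ 0 :=
      hVopen.measure_ne_zero volume ⟨z0, hz0V⟩
    have hex : ∃ w ∈ interior t ∩ U, (w ∈ t → DifferentiableWithinAt ℝ f t w) := by
      by_contra hco
      push_neg at hco
      refine hVpos (measure_mono_null (fun w hw => ?_) (ae_iff.mp hae))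
      simpa [_root_.not_imp] using hco w hw
    obtain ⟨w, hwV, hwd⟩ := hex
    have hwt : t ∈ 𝓝 w := mem_interior_iff_mem_nhds.mp hwV.1
    exact ⟨w, hwV.2, (hwd (mem_of_mem_nhds hwt)).differentiableAt hwt⟩
  have hkey : ∀ w ∈ {w : E | DifferentiableAt ℝ f w},
      f w + ⟪gradient f w, y - w⟫ + μ / 2 * ‖y - w‖ ^ 2 ≤ f y := by
    intro w hw
    have hv : HasGradientAt f (gradient f w) w := hw.hasGradientAt
    have hq : HasGradientAt (fun z : E => μ / 2 * ‖z‖ ^ 2) ((2 * (μ / 2)) • w) w :=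
      aux_grad_sq (μ / 2) w
    have h2c : (2 * (μ / 2)) = μ := by ring
    rw [h2c] at hq
    have hgd : HasGradientAt (fun z : E => f z - μ / 2 * ‖z‖ ^ 2)
        (gradient f w - μ • w) w := by
      rw [hasGradientAt_iff_hasFDerivAt] at hv hq ⊢
      rw [map_sub]
      exact hv.sub hq
    have hsupp := aux_support_diff hsc hgd y
    have hexp : ‖y - w‖ ^ 2 = ‖y‖ ^ 2 - 2 * ⟪w, y⟫ + ‖w‖ ^ 2 := by
      rw [norm_sub_sq_real, real_inner_comm]
    have hin : ⟪gradient f w - μ • w, y - w⟫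
        = ⟪gradient f w, y - w⟫ - μ * (⟪w, y⟫ - ‖w‖ ^ 2) := by
      simp only [inner_sub_left, inner_sub_right, real_inner_smul_left,
        real_inner_self_eq_norm_sq]
      ring
    rw [hin] at hsupp
    nlinarith [hsupp]
  have hcont : Continuous (fun w : E => f w + ⟪gradient f w, y - w⟫ + μ / 2 * ‖y - w‖ ^ 2) :=
    (hfc.add (Continuous.inner hgc (continuous_const.sub continuous_id))).add
      (continuous_const.mul ((continuous_const.sub continuous_id).norm.pow 2))
  have := le_on_closure hkey hcont.continuousOn continuous_const.continuousOn
    (x := z) (by rw [hdense.closure_eq]; trivial)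
  exact this

lemma aux_grad_everywhere (f : E → ℝ) (μ Lc : ℝ) (hμ : 0 < μ) (hLc : 0 < Lc)
    (hsc : ConvexOn ℝ Set.univ (fun y => f y - μ / 2 * ‖y‖ ^ 2))
    (hlip : LipschitzWith Lc.toNNReal (fun y => gradient f y)) :
    ∀ z : E, HasGradientAt f (gradient f z) z := by
  intro z
  have hs := aux_strong_support f μ hμ hsc hlip
  have hlow : ∀ y : E, f z + ⟪gradient f z, y - z⟫ ≤ f y := by
    intro y
    have h := hs z y
    nlinarith [sq_nonneg ‖y - z‖]
  have hup : ∀ y : E, f y - f z - ⟪gradient f z, y - z⟫ ≤ Lc * ‖y - z‖ ^ 2 := by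
    intro y
    have h2 := hs y z
    have h3 : f y - f z ≤ ⟪gradient f y, y - z⟫ := by
      have he : ⟪gradient f y, z - y⟫ = -⟪gradient f y, y - z⟫ := by
        rw [← inner_neg_right]; congr 1; abel
      rw [he] at h2
      nlinarith [sq_nonneg ‖z - y‖]
    have h4 : ⟪gradient f y, y - z⟫ - ⟪gradient f z, y - z⟫
        = ⟪gradient f y - gradient f z, y - z⟫ := (inner_sub_left _ _ _).symm
    have h5 : ⟪gradient f y - gradient f z, y - z⟫
        ≤ ‖gradient f y - gradient f z‖ * ‖y - z‖ := real_inner_le_norm _ _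
    have h6 : ‖gradient f y - gradient f z‖ ≤ Lc * ‖y - z‖ := by
      have hd := hlip.dist_le_mul y z
      rw [dist_eq_norm, dist_eq_norm] at hd
      simpa [Real.coe_toNNReal _ hLc.le] using hd
    nlinarith [norm_nonneg (y - z), norm_nonneg (gradient f y - gradient f z)]
  rw [hasGradientAt_iff_isLittleO, Asymptotics.isLittleO_iff]
  intro c hc
  have hball : ∀ᶠ y in nhds z, ‖y - z‖ ≤ c / Lc := by
    filter_upwards [Metric.closedBall_mem_nhds z (show (0:ℝ) < c / Lc by positivity)] with y hy
    rwa [Metric.mem_closedBall, dist_eq_norm] at hy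
  filter_upwards [hball] with y hy
  have h1 := hlow y
  have h2 := hup y
  have habs : ‖f y - f z - ⟪gradient f z, y - z⟫‖ = f y - f z - ⟪gradient f z, y - z⟫ := by
    rw [Real.norm_eq_abs, abs_of_nonneg (by linarith)]
  rw [habs]
  have h7 : ‖y - z‖ * Lc ≤ c := (le_div_iff₀ hLc).mp hy
  nlinarith [norm_nonneg (y - z), mul_le_mul_of_nonneg_right h7 (norm_nonneg (y - z))]

lemma aux_descent (f : E → ℝ) (μ Lc : ℝ) (hμ : 0 < μ) (hLc : 0 < Lc)
    (hsc : ConvexOn ℝ Set.univ (fun y => f y - μ / 2 * ‖y‖ ^ 2))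
    (hlip : LipschitzWith Lc.toNNReal (fun y => gradient f y))
    (x d : E) :
    ∀ t : ℝ, 0 ≤ t →
      f (x + t • d) ≤ f x + t * ⟪gradient f x, d⟫ + Lc / 2 * t ^ 2 * ‖d‖ ^ 2 := by
  have hgall := aux_grad_everywhere f μ Lc hμ hLc hsc hlip
  set c1 : ℝ := ⟪gradient f x, d⟫ with hc1
  set ψ : ℝ → ℝ := fun t => f (x + t • d) - f x - t * c1 - Lc / 2 * t ^ 2 * ‖d‖ ^ 2 with hψ
  have hψd : ∀ t : ℝ, HasDerivAt ψ
      (⟪gradient f (x + t • d), d⟫ - c1 - Lc * t * ‖d‖ ^ 2) t := by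
    intro t
    have h1 : HasFDerivAt f (InnerProductSpace.toDual ℝ E (gradient f (x + t • d)))
        (x + t • d) := hasGradientAt_iff_hasFDerivAt.mp (hgall _)
    have h1' : HasFDerivAt f (InnerProductSpace.toDual ℝ E (gradient f (x + t • d)))
        ((fun s : ℝ => x + s • d) t) := h1
    have h2 : HasDerivAt (fun s : ℝ => x + s • d) d t := by
      simpa using ((hasDerivAt_id t).smul_const d).const_add x
    have h3 : HasDerivAt (fun s : ℝ => f (x + s • d)) ⟪gradient f (x + t • d), d⟫ t := by
      simpa [Function.comp_def, InnerProductSpace.toDual_apply_apply] using h1'.comp_hasDerivAt t h2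
    have h5 : HasDerivAt (fun s : ℝ => s * c1) c1 t := by
      simpa using (hasDerivAt_id t).mul_const c1
    have h6 : HasDerivAt (fun s : ℝ => Lc / 2 * s ^ 2 * ‖d‖ ^ 2) (Lc * t * ‖d‖ ^ 2) t := by
      have := ((hasDerivAt_pow 2 t).const_mul (Lc / 2)).mul_const (‖d‖ ^ 2)
      refine this.congr_deriv ?_
      push_cast; ring
    have h7 := ((h3.sub (hasDerivAt_const t (f x))).sub h5).sub h6
    refine h7.congr_deriv ?_
    ring
  have hmono : AntitoneOn ψ (Set.Ici 0) := by
    apply antitoneOn_of_deriv_nonpos (convex_Ici 0)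
    · exact (Differentiable.continuous fun t => (hψd t).differentiableAt).continuousOn
    · intro t _
      exact ((hψd t).differentiableAt).differentiableWithinAt
    · intro t ht
      rw [interior_Ici] at ht
      rw [(hψd t).deriv]
      have h6 : ‖gradient f (x + t • d) - gradient f x‖ ≤ Lc * (t * ‖d‖) := by
        have hd2 := hlip.dist_le_mul (x + t • d) x
        rw [dist_eq_norm, dist_eq_norm] at hd2
        have he : x + t • d - x = t • d := by abel
        rw [he] at hd2
        rw [norm_smul, Real.norm_of_nonneg (le_of_lt ht)] at hd2
        simpa [Real.coe_toNNReal _ hLc.le, mul_assoc] using hd2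
      have h8 := real_inner_le_norm (gradient f (x + t • d) - gradient f x) d
      rw [inner_sub_left] at h8
      have h9 := mul_le_mul_of_nonneg_right h6 (norm_nonneg d)
      rw [hc1]
      nlinarith [norm_nonneg d]
  intro t ht
  have hle := hmono (Set.self_mem_Ici) (Set.mem_Ici.mpr ht) ht
  have hψ0 : ψ 0 = 0 := by simp [hψ]
  rw [hψ0] at hle
  have : f (x + t • d) - f x - t * c1 - Lc / 2 * t ^ 2 * ‖d‖ ^ 2 ≤ 0 := hle
  linarith
end Aux
/-- `φ_g(d) = max_{1 ≤ i ≤ m} ⟨g_i, d⟩ + ‖d‖²/2`. -/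
noncomputable def phi {n m : ℕ} (g : Fin m → EuclideanSpace ℝ (Fin n))
    (d : EuclideanSpace ℝ (Fin n)) : ℝ :=
  (⨆ i, ⟪g i, d⟫) + ‖d‖ ^ 2 / 2

/-- The Armijo condition at stepsize `β` for direction `d` at `x`:
`F_i(x + βd) - F_i(x) ≤ σβ⟨∇F_i(x), d⟩` for every `i`. -/
def ArmijoAt {n m : ℕ} (F : Fin m → EuclideanSpace ℝ (Fin n) → ℝ)
    (x d : EuclideanSpace ℝ (Fin n)) (σ β : ℝ) : Prop :=
  ∀ i, F i (x + β • d) - F i x ≤ σ * β * ⟪gradient (F i) x, d⟫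

/-- `β` is an Armijo backtracking stepsize: `β ∈ (0,1]`, the Armijo condition holds at `β`,
and either `β = 1` or the Armijo condition fails (for some index) at `β/γ`. -/
def ArmijoBacktrack {n m : ℕ} (F : Fin m → EuclideanSpace ℝ (Fin n) → ℝ)
    (x d : EuclideanSpace ℝ (Fin n)) (σ γ β : ℝ) : Prop :=
  0 < β ∧ β ≤ 1 ∧ ArmijoAt F x d σ β ∧ (β = 1 ∨ ¬ ArmijoAt F x d σ (β / γ))

theorem stmt_17 {n m : ℕ} (hm : 0 < m) (F : Fin m → EuclideanSpace ℝ (Fin n) → ℝ)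
    (L mu : Fin m → ℝ) (hL : ∀ i, 0 < L i) (hmu : ∀ i, 0 < mu i)
    (hlip : ∀ i, LipschitzWith (L i).toNNReal (fun y => gradient (F i) y))
    (hsc : ∀ i, ConvexOn ℝ Set.univ (fun y : EuclideanSpace ℝ (Fin n) =>
      F i y - mu i / 2 * ‖y‖ ^ 2))
    (σ γ : ℝ) (hσ0 : 0 < σ) (hσ1 : σ ≤ 1 / 2) (hγ : γ ∈ Set.Ioo (0 : ℝ) 1)
    (x x' : EuclideanSpace ℝ (Fin n)) (hxx : x ≠ x')
    (α : Fin m → ℝ)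
    (hα : ∀ i, α i = ⟪x - x', gradient (F i) x - gradient (F i) x'⟫ / ‖x - x'‖ ^ 2)
    (d : EuclideanSpace ℝ (Fin n)) (hd : d ≠ 0)
    (hdi : ∀ i, ⟪gradient (F i) x, d⟫ ≤ -(α i) * ‖d‖ ^ 2)
    (β : ℝ) (hβ : ArmijoBacktrack F x d σ γ β) :
    min 1 (Finset.univ.inf' (Finset.univ_nonempty_iff.mpr ⟨⟨0, hm⟩⟩)
      (fun i => 2 * γ * (1 - σ) * mu i / L i)) ≤ β ∧ β ≤ 1 := by
  obtain ⟨hβ0, hβ1, hA, hcase⟩ := hβ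
  refine ⟨?_, hβ1⟩
  rcases hcase with h1 | hfail
  · rw [h1]; exact min_le_left _ _
  · obtain ⟨i, hi⟩ := not_forall.mp hfail
    rw [not_le] at hi
    set t : ℝ := β / γ with htdef
    have ht0 : 0 < t := div_pos hβ0 hγ.1
    have hdesc := aux_descent (F i) (mu i) (L i) (hmu i) (hL i) (hsc i) (hlip i) x d t ht0.le
    have hss := aux_strong_support (F i) (mu i) (hmu i) (hsc i) (hlip i)
    -- strong monotonicity
    have hmono : mu i * ‖x - x'‖ ^ 2 ≤ ⟪x - x', gradient (F i) x - gradient (F i) x'⟫ := by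
      have h1 := hss x x'
      have h2 := hss x' x
      have e1 : ‖x' - x‖ = ‖x - x'‖ := norm_sub_rev _ _
      rw [e1] at h1
      have e2 : ⟪x - x', gradient (F i) x - gradient (F i) x'⟫
          = - ⟪gradient (F i) x, x' - x⟫ - ⟪gradient (F i) x', x - x'⟫ := by
        rw [real_inner_comm]
        simp only [inner_sub_left, inner_sub_right]
        ring
      rw [e2]
      linarith
    have hxx2 : (0:ℝ) < ‖x - x'‖ ^ 2 := by
      have hne : x - x' ≠ 0 := sub_ne_zero.mpr hxx
      exact pow_pos (norm_pos_iff.mpr hne) 2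
    have hαi : mu i ≤ α i := by
      rw [hα i, le_div_iff₀ hxx2]
      linarith
    have hd2 : (0:ℝ) < ‖d‖ ^ 2 := pow_pos (norm_pos_iff.mpr hd) 2
    have hgd : ⟪gradient (F i) x, d⟫ ≤ -(mu i) * ‖d‖ ^ 2 := by
      refine le_trans (hdi i) ?_
      nlinarith [hαi, hd2]
    have hkey : σ * t * ⟪gradient (F i) x, d⟫
        < t * ⟪gradient (F i) x, d⟫ + L i / 2 * t ^ 2 * ‖d‖ ^ 2 := by
      calc σ * t * ⟪gradient (F i) x, d⟫ < F i (x + t • d) - F i x := hi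
        _ ≤ t * ⟪gradient (F i) x, d⟫ + L i / 2 * t ^ 2 * ‖d‖ ^ 2 := by linarith [hdesc]
    have hσ' : (0:ℝ) ≤ 1 - σ := by linarith
    have ht2 : 2 * (1 - σ) * mu i / L i < t := by
      rw [div_lt_iff₀ (hL i)]
      nlinarith [mul_le_mul_of_nonneg_left hgd (mul_nonneg hσ' ht0.le),
        mul_pos ht0 hd2, hmu i]
    have hβt : γ * t = β := by
      rw [htdef, mul_comm, div_mul_cancel₀ β (ne_of_gt hγ.1)]
    have hlow : 2 * γ * (1 - σ) * mu i / L i < β := by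
      rw [← hβt]
      have he : 2 * γ * (1 - σ) * mu i / L i = γ * (2 * (1 - σ) * mu i / L i) := by
        ring
      rw [he]
      exact mul_lt_mul_of_pos_left ht2 hγ.1
    exact le_trans (min_le_right _ _)
      (le_trans (Finset.inf'_le _ (Finset.mem_univ i)) hlow.le)
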